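/- arXiv:2401.07267 — 5 statements merged into one kernel-verified Lean document; each statement's English description precedes it below -/
import Mathlib

section
/- Let λ > 0, μ ≥ 0, and let p: ℝ → ℝ be μ-amenable with parameter λ. Then for every dimension d and every vector β ∈ ℝ^d, λ‖β‖₁ ≤ Σ_{j=1}^d p(β_j) + (μ/2)‖β‖₂², where ‖β‖₁ = Σ_j |β_j| and ‖β‖₂ is the Euclidean norm. -/
theorem amenable_scalar (lam mu : ℝ) (hlam : 0 < lam) (hmu : 0 ≤ mu)
    (p : ℝ → ℝ)
    (heven : ∀ t : ℝ, p (-t) = p t)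
    (h0 : p 0 = 0)
    (hdiff : ∀ t : ℝ, t ≠ 0 → DifferentiableAt ℝ p t)
    (htend : Filter.Tendsto (fun t => deriv p t) (nhdsWithin 0 (Set.Ioi 0)) (nhds lam))
    (hconv : ConvexOn ℝ Set.univ (fun t => p t + mu / 2 * t ^ 2)) (t : ℝ) :
    lam * |t| ≤ p t + mu / 2 * t ^ 2 := by
  -- reduce to t ≥ 0
  wlog ht : 0 ≤ t generalizing t
  · have := this (-t) (by linarith [le_of_not_ge ht])
    simpa [heven, abs_neg, neg_pow] using this
  rcases eq_or_lt_of_le ht with rfl | ht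
  · simp [h0]
  -- continuity of p
  have hgcont : ContinuousOn (fun s => p s + mu / 2 * s ^ 2) Set.univ :=
    hconv.continuousOn isOpen_univ
  have hpcont : Continuous p := by
    have : Continuous fun s => p s + mu / 2 * s ^ 2 :=
      continuousOn_univ.mp hgcont
    have := this.sub (by continuity : Continuous fun s : ℝ => mu / 2 * s ^ 2)
    simpa [Pi.sub_def] using this
  set g : ℝ → ℝ := fun s => p s + mu / 2 * s ^ 2 with hg
  have hg0 : g 0 = 0 := by simp [hg, h0]
  -- key: lam ≤ g t / t
  have key : lam ≤ g t / t := by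
    refine le_of_forall_sub_le fun ε hε => ?_
    -- find δ from the limit
    have hev : ∀ᶠ u in nhdsWithin 0 (Set.Ioi 0), deriv p u > lam - ε :=
      htend.eventually (eventually_gt_nhds (by linarith))
    rw [eventually_nhdsWithin_iff] at hev
    rcases Metric.eventually_nhds_iff.mp hev with ⟨δ, hδ, hδ'⟩
    set s := min (δ / 2) t with hs
    have hs0 : 0 < s := lt_min (by linarith) ht
    have hst : s ≤ t := min_le_right _ _
    -- MVT on [0, s]
    obtain ⟨c, hc, hceq⟩ := exists_hasDerivAt_eq_slope p (deriv p) hs0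
      (hpcont.continuousOn) (fun x hx => (hdiff x (ne_of_gt hx.1)).hasDerivAt)
    have hcδ : deriv p c > lam - ε := by
      apply hδ' (show dist c 0 < δ by
        rw [Real.dist_eq, sub_zero, abs_of_pos hc.1]
        calc c < s := hc.2
          _ ≤ δ / 2 := min_le_left _ _
          _ < δ := by linarith)
      exact hc.1
    have hps : p s / s > lam - ε := by
      have : deriv p c = p s / s := by simpa [h0] using hceq
      linarith [this ▸ hcδ]
    have hgs : lam - ε ≤ g s / s := by
      have : g s / s = p s / s + mu / 2 * s := by
        field_simp [hg]; ring
      rw [this]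
      nlinarith [mul_nonneg (div_nonneg hmu (by norm_num : (0:ℝ) ≤ 2)) hs0.le]
    -- slope monotone
    have hmonos : g s / s ≤ g t / t := by
      have := hconv.secant_mono (a := 0) (x := s) (y := t) trivial trivial trivial
        (ne_of_gt hs0) (ne_of_gt ht) hst
      simpa [hg0] using this
    linarith
  have hfin : lam * t ≤ g t := by
    have := (le_div_iff₀ ht).mp key
    linarith
  calc lam * |t| = lam * t := by rw [abs_of_pos ht]
    _ ≤ g t := hfin


/-- A scalar penalty `p` is `μ`-amenable with parameter `λ > 0`:
(i) even with `p 0 = 0`; (ii) nondecreasing on `[0,∞)`; (iii) `t ↦ p t / t`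
nonincreasing on `(0,∞)`; (iv) differentiable away from `0`;
(v) `p' t → λ` as `t → 0⁺`; (vi) `t ↦ p t + (μ/2) t²` convex. -/
def IsAmenable (lam mu : ℝ) (p : ℝ → ℝ) : Prop :=
  (∀ t : ℝ, p (-t) = p t) ∧
  p 0 = 0 ∧
  MonotoneOn p (Set.Ici 0) ∧
  AntitoneOn (fun t => p t / t) (Set.Ioi 0) ∧
  (∀ t : ℝ, t ≠ 0 → DifferentiableAt ℝ p t) ∧
  Filter.Tendsto (fun t => deriv p t) (nhdsWithin 0 (Set.Ioi 0)) (nhds lam) ∧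
  ConvexOn ℝ Set.univ (fun t => p t + mu / 2 * t ^ 2)

/-- For a `μ`-amenable penalty `p` with parameter `λ`,
`λ‖β‖₁ ≤ Σⱼ p(βⱼ) + (μ/2)‖β‖₂²` for every vector `β ∈ ℝ^d`. -/
theorem amenable_l1_bound (lam mu : ℝ) (hlam : 0 < lam) (hmu : 0 ≤ mu)
    (p : ℝ → ℝ) (hp : IsAmenable lam mu p) (d : ℕ) (β : Fin d → ℝ) :
    lam * (∑ j, |β j|) ≤ (∑ j, p (β j)) + mu / 2 * (∑ j, (β j) ^ 2) := by
  obtain ⟨heven, h0, _, _, hdiff, htend, hconv⟩ := hp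
  calc lam * (∑ j, |β j|) = ∑ j, lam * |β j| := by rw [Finset.mul_sum]
    _ ≤ ∑ j, (p (β j) + mu / 2 * (β j) ^ 2) := by
        exact Finset.sum_le_sum fun j _ =>
          amenable_scalar lam mu hlam hmu p heven h0 hdiff htend hconv (β j)
    _ = (∑ j, p (β j)) + mu / 2 * (∑ j, (β j) ^ 2) := by
        rw [Finset.sum_add_distrib, Finset.mul_sum]
end

section
/- Let λ > 0, μ ≥ 0, and let p: ℝ → ℝ be μ-amenable with parameter λ. Then the function t ↦ λ|t| − p(t) is differentiable at 0 with derivative 0 (hence, since p is differentiable away from 0, the map β ↦ λ‖β‖₁ − Σ_j p(β_j) is everywhere differentiable). -/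
/-- For a `μ`-amenable penalty `p`, the function `t ↦ λ|t| − p(t)` is differentiable
at `0` with derivative `0`; hence (since `p` is differentiable away from `0`) the map
`β ↦ λ‖β‖₁ − Σⱼ p(βⱼ)` is everywhere differentiable. -/
theorem amenable_l1_minus_penalty_differentiable (lam mu : ℝ) (hlam : 0 < lam)
    (hmu : 0 ≤ mu) (p : ℝ → ℝ) (hp : IsAmenable lam mu p) :
    HasDerivAt (fun t : ℝ => lam * |t| - p t) 0 0 ∧
    (∀ d : ℕ, Differentiable ℝ
      (fun β : Fin d → ℝ => lam * (∑ j, |β j|) - ∑ j, p (β j))) := by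
  obtain ⟨heven, h0, hmono, hanti, hdiff, hderiv, hconv⟩ := hp
  -- `p` is continuous, since `p + μ/2 t²` is convex on `ℝ` hence continuous.
  have hpc : Continuous p := by
    have hq : ContinuousOn (fun t : ℝ => p t + mu / 2 * t ^ 2) Set.univ :=
      hconv.continuousOn isOpen_univ
    have hq' : Continuous (fun t : ℝ => p t + mu / 2 * t ^ 2) :=
      continuousOn_univ.mp hq
    have h2 : Continuous fun t : ℝ => (p t + mu / 2 * t ^ 2) - mu / 2 * t ^ 2 :=
      hq'.sub (by continuity)
    simpa using h2
  -- the difference quotient of `p` at `0` from the right tends to `lam`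
  have hslope : Filter.Tendsto (fun t => p t / t) (nhdsWithin 0 (Set.Ioi 0))
      (nhds lam) := by
    rw [Metric.tendsto_nhdsWithin_nhds] at hderiv ⊢
    intro ε hε
    obtain ⟨δ, hδ, hd⟩ := hderiv ε hε
    refine ⟨δ, hδ, fun t ht htd => ?_⟩
    have ht' : (0 : ℝ) < t := ht
    obtain ⟨c, hc, hceq⟩ := exists_deriv_eq_slope p ht' hpc.continuousOn
      (fun x hx => (hdiff x (ne_of_gt hx.1)).differentiableWithinAt)
    have hcd : dist c 0 < δ := by
      rw [Real.dist_eq, sub_zero] at htd ⊢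
      rw [abs_of_pos hc.1]
      rw [abs_of_pos ht'] at htd
      linarith [hc.2]
    have := hd hc.1 hcd
    rwa [hceq, h0, sub_zero, sub_zero] at this
  -- negation maps the left punctured neighborhood to the right one
  have hneg : Filter.Tendsto (fun t : ℝ => -t) (nhdsWithin 0 (Set.Iio 0))
      (nhdsWithin 0 (Set.Ioi 0)) := by
    have h1 : Filter.Tendsto (fun t : ℝ => -t) (nhdsWithin 0 (Set.Iio 0))
        (nhds 0) := by
      have := (continuous_neg.tendsto (0 : ℝ))
      rw [neg_zero] at this
      exact this.mono_left nhdsWithin_le_nhds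
    refine tendsto_nhdsWithin_of_tendsto_nhds_of_eventually_within _ h1 ?_
    exact eventually_nhdsWithin_of_forall fun x hx => by
      simpa using (hx : x < 0)
  -- the main derivative claim
  have hg0 : HasDerivAt (fun t : ℝ => lam * |t| - p t) 0 0 := by
    rw [hasDerivAt_iff_tendsto_slope, ← nhdsLT_sup_nhdsGT,
      Filter.tendsto_sup]
    constructor
    · -- left limit
      have hL0 : Filter.Tendsto (fun t : ℝ => lam - p (-t) / (-t))
          (nhdsWithin 0 (Set.Iio 0)) (nhds (lam - lam)) :=
        Filter.Tendsto.sub tendsto_const_nhds (hslope.comp hneg)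
      have hL : Filter.Tendsto (fun t : ℝ => -(lam - p (-t) / (-t)))
          (nhdsWithin 0 (Set.Iio 0)) (nhds 0) := by
        have := hL0.neg
        rw [sub_self, neg_zero] at this
        exact this
      refine (tendsto_nhdsWithin_congr (fun t ht => ?_) hL)
      have ht : t < 0 := ht
      have htne : t ≠ 0 := ne_of_lt ht
      rw [slope_def_field, h0]
      rw [abs_of_neg ht, heven t]
      field_simp
      simp only [abs_zero, mul_zero, sub_zero]
      ring
    · -- right limit
      have hR : Filter.Tendsto (fun t : ℝ => lam - p t / t)
          (nhdsWithin 0 (Set.Ioi 0)) (nhds 0) := by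
        have hR0 : Filter.Tendsto (fun t : ℝ => lam - p t / t)
            (nhdsWithin 0 (Set.Ioi 0)) (nhds (lam - lam)) :=
          Filter.Tendsto.sub tendsto_const_nhds hslope
        rwa [sub_self] at hR0
      refine (tendsto_nhdsWithin_congr (fun t ht => ?_) hR)
      have ht : (0 : ℝ) < t := ht
      have htne : t ≠ 0 := ne_of_gt ht
      rw [slope_def_field, h0]
      rw [abs_of_pos ht]
      field_simp
      simp only [abs_zero, mul_zero, sub_zero]
      ring
  -- differentiability of `t ↦ lam * |t| - p t` everywhere
  have hgdiff : Differentiable ℝ (fun t : ℝ => lam * |t| - p t) := by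
    intro t
    rcases eq_or_ne t 0 with rfl | ht
    · exact hg0.differentiableAt
    · exact (((differentiableAt_abs ht).const_mul lam).sub (hdiff t ht))
  refine ⟨hg0, fun d => ?_⟩
  have hrw : (fun β : Fin d → ℝ => lam * (∑ j, |β j|) - ∑ j, p (β j))
      = fun β : Fin d → ℝ => ∑ j, (lam * |β j| - p (β j)) := by
    ext β
    rw [Finset.mul_sum, ← Finset.sum_sub_distrib]
  rw [hrw]
  exact Differentiable.fun_sum fun j _ =>
    hgdiff.comp (differentiable_apply j)
end

section
/- Let λ > 0, μ ≥ 0, and let p: ℝ → ℝ be μ-amenable with parameter λ. Then the function t ↦ p(t) + (μ/2)t² − λ|t| is convex on ℝ. -/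
/-- For a `μ`-amenable penalty `p` with parameter `λ`, the function
`t ↦ p(t) + (μ/2)t² − λ|t|` is convex on `ℝ`. -/
theorem amenable_convexity (lam mu : ℝ) (hlam : 0 < lam) (hmu : 0 ≤ mu)
    (p : ℝ → ℝ) (hp : IsAmenable lam mu p) :
    ConvexOn ℝ Set.univ (fun t : ℝ => p t + mu / 2 * t ^ 2 - lam * |t|) := by
  obtain ⟨heven, h0, hmono, hanti, hdiff, htend, hconv⟩ := hp
  set g : ℝ → ℝ := fun t => p t + mu / 2 * t ^ 2 with hg
  -- differentiability of g away from 0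
  have hgd : ∀ t : ℝ, t ≠ 0 → DifferentiableAt ℝ g t := by
    intro t ht
    exact (hdiff t ht).add ((differentiableAt_id.pow 2).const_mul _)
  have hderiv : ∀ t : ℝ, t ≠ 0 → deriv g t = deriv p t + mu * t := by
    intro t ht
    have h1 : HasDerivAt g (deriv p t + mu / 2 * (↑2 * t ^ 1)) t :=
      (hdiff t ht).hasDerivAt.add ((hasDerivAt_pow 2 t).const_mul (mu / 2))
    rw [h1.deriv]; push_cast; ring
  -- g 0 = 0
  have hg0 : g 0 = 0 := by simp [hg, h0]
  -- continuity of g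
  have hgc : Continuous g := by
    have := hconv.continuousOn isOpen_univ
    rw [← continuousOn_univ]
    exact this
  -- deriv g tends to lam at 0+
  have htg : Filter.Tendsto (fun t => deriv g t) (nhdsWithin 0 (Set.Ioi 0)) (nhds lam) := by
    have h1 : Filter.Tendsto (fun t : ℝ => deriv p t + mu * t)
        (nhdsWithin 0 (Set.Ioi 0)) (nhds lam) := by
      have h2 : Filter.Tendsto (fun t : ℝ => mu * t) (nhdsWithin 0 (Set.Ioi 0)) (nhds 0) := by
        have hc : Continuous (fun t : ℝ => mu * t) := continuous_const.mul continuous_id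
        have := hc.tendsto (0 : ℝ)
        simp only [mul_zero] at this
        exact this.mono_left nhdsWithin_le_nhds
      have := htend.add h2
      simpa using this
    refine h1.congr' ?_
    filter_upwards [self_mem_nhdsWithin] with t ht
    exact (hderiv t (ne_of_gt ht)).symm
  -- deriv g ≥ lam on (0, ∞)
  have hge : ∀ t : ℝ, 0 < t → lam ≤ deriv g t := by
    intro t ht
    refine le_of_tendsto htg ?_
    filter_upwards [self_mem_nhdsWithin, Ioo_mem_nhdsGT ht] with u hu hu'
    have h1 : deriv g u ≤ slope g u t :=
      hconv.deriv_le_slope (Set.mem_univ u) (Set.mem_univ t) hu'.2 (hgd u (ne_of_gt hu))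
    have h2 : slope g u t ≤ deriv g t :=
      hconv.slope_le_deriv (Set.mem_univ u) (Set.mem_univ t) hu'.2 (hgd t (ne_of_gt ht))
    exact h1.trans h2
  -- F := g - lam * id
  set F : ℝ → ℝ := fun t => g t - lam * t with hF
  -- slope bound: for 0 < s < t, lam * (t - s) ≤ g t - g s
  have hslope : ∀ s t : ℝ, 0 < s → s < t → lam * (t - s) ≤ g t - g s := by
    intro s t hs hst
    have h1 : lam ≤ slope g s t :=
      (hge s hs).trans (hconv.deriv_le_slope (Set.mem_univ s) (Set.mem_univ t) hst
        (hgd s (ne_of_gt hs)))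
    rw [slope_def_field] at h1
    have hts : 0 < t - s := sub_pos.mpr hst
    exact (le_div_iff₀ hts).mp h1
  -- F monotone on Ici 0
  have hFmono : MonotoneOn F (Set.Ici 0) := by
    intro s hs t ht hst
    rcases eq_or_lt_of_le hst with rfl | hst'
    · exact le_rfl
    rcases eq_or_lt_of_le (Set.mem_Ici.mp hs : (0:ℝ) ≤ s) with rfl | hs'
    · -- s = 0 : need g t ≥ lam * t
      simp only [hF, hg0, mul_zero, sub_zero]
      have key : lam * t ≤ g t := by
        have hc : Continuous (fun u : ℝ => g t - g u - lam * (t - u)) := by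
          exact (continuous_const.sub hgc).sub
            (continuous_const.mul (continuous_const.sub continuous_id))
        have hlim : Filter.Tendsto (fun u : ℝ => g t - g u - lam * (t - u))
            (nhdsWithin 0 (Set.Ioi 0)) (nhds (g t - g 0 - lam * (t - 0))) :=
          (hc.tendsto 0).mono_left nhdsWithin_le_nhds
        have hge0 : 0 ≤ g t - g 0 - lam * (t - 0) := by
          refine ge_of_tendsto hlim ?_
          filter_upwards [Ioo_mem_nhdsGT hst'] with u hu
          have := hslope u t hu.1 hu.2
          linarith
        rw [hg0] at hge0
        linarith
      linarith
    · have := hslope s t hs' hst'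
      simp only [hF]
      nlinarith
  -- F convex on Ici 0
  have hFconv : ConvexOn ℝ (Set.Ici 0) F := by
    have h1 : ConvexOn ℝ (Set.Ici (0:ℝ)) g := hconv.subset (Set.subset_univ _) (convex_Ici 0)
    have h2 : ConcaveOn ℝ (Set.Ici (0:ℝ)) (fun t => lam * t) := by
      have := (concaveOn_id (convex_Ici (0:ℝ))).smul hlam.le
      simpa [smul_eq_mul] using this
    exact h1.sub h2
  -- abs image
  have himg : (fun x : ℝ => |x|) '' Set.univ = Set.Ici (0:ℝ) := by
    ext x
    simp only [Set.image_univ, Set.mem_range, Set.mem_Ici]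
    constructor
    · rintro ⟨y, rfl⟩; exact abs_nonneg y
    · intro hx; exact ⟨x, abs_of_nonneg hx⟩
  have habs : ConvexOn ℝ Set.univ (fun x : ℝ => |x|) := by
    have := convexOn_univ_norm (E := ℝ)
    exact this
  have hcomp : ConvexOn ℝ Set.univ (F ∘ (fun x : ℝ => |x|)) := by
    refine ConvexOn.comp ?_ habs ?_
    · rw [himg]; exact hFconv
    · rw [himg]; exact hFmono
  have heq : (fun t : ℝ => p t + mu / 2 * t ^ 2 - lam * |t|) = F ∘ (fun x : ℝ => |x|) := by
    funext t
    simp only [Function.comp, hF, hg]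
    have hpabs : p |t| = p t := by
      rcases le_or_gt 0 t with h | h
      · rw [abs_of_nonneg h]
      · rw [abs_of_neg h, heven]
    rw [hpabs, sq_abs]
  rw [heq]
  exact hcomp
end

section
/- Let n ≥ 1, let X be an n×p real matrix, fix j ∈ {1,…,p}, and let φ, g ∈ ℝ^p with φ_j = 0 and g_j = 0. Set r = X(e_j − φ) ∈ ℝⁿ, and suppose the node-wise first-order (KKT) conditions (1/n)(Xᵀr)_k = g_k hold for every k ≠ j. Define τ² = (1/n)(Xᵀr)_j and assume τ² ≠ 0. Then: (a) τ² = (1/n)‖r‖₂² + ⟨φ, g⟩; and (b) with Θ_j := (1/τ²)(e_j − φ) and Σ̂ := (1/n)XᵀX, the vector Σ̂Θ_j − e_j has j-th coordinate 0 and k-th coordinate g_k/τ² for k ≠ j, so that ‖Σ̂Θ_j − e_j‖_∞ = ‖g‖_∞/|τ²|. -/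
open Matrix

/-- Node-wise KKT identities: if `r = X(e_j − φ)` with `φ_j = 0`, `g_j = 0`,
`(Xᵀr)_k/n = g_k` for `k ≠ j`, and `τ² = (Xᵀr)_j/n ≠ 0`, then
(a) `τ² = ‖r‖₂²/n + ⟨φ, g⟩`; and (b) with `Θ_j = (e_j − φ)/τ²` and `Σ̂ = XᵀX/n`,
the vector `Σ̂Θ_j − e_j` has `j`-th coordinate `0` and `k`-th coordinate `g_k/τ²`
for `k ≠ j`, so `‖Σ̂Θ_j − e_j‖_∞ = ‖g‖_∞/|τ²|`. -/
theorem nodewise_kkt (n p : ℕ) (hn : 1 ≤ n)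
    (X : Matrix (Fin n) (Fin p) ℝ) (j : Fin p) (φ g : Fin p → ℝ)
    (hφj : φ j = 0) (hgj : g j = 0)
    (r : Fin n → ℝ) (hr : r = X *ᵥ (Pi.single j 1 - φ))
    (hkkt : ∀ k : Fin p, k ≠ j → (n : ℝ)⁻¹ * (Xᵀ *ᵥ r) k = g k)
    (τsq : ℝ) (hτsq : τsq = (n : ℝ)⁻¹ * (Xᵀ *ᵥ r) j) (hτne : τsq ≠ 0)
    (Θj w : Fin p → ℝ)
    (hΘj : Θj = τsq⁻¹ • (Pi.single j 1 - φ))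
    (hw : w = ((n : ℝ)⁻¹ • (Xᵀ * X)) *ᵥ Θj - Pi.single j 1) :
    τsq = (n : ℝ)⁻¹ * (∑ i, (r i) ^ 2) + (∑ k, φ k * g k) ∧
    w j = 0 ∧
    (∀ k : Fin p, k ≠ j → w k = g k / τsq) ∧
    (⨆ k, |w k|) = (⨆ k, |g k|) / |τsq| := by
  set s : Fin p → ℝ := Xᵀ *ᵥ r with hs
  -- Part (a)
  have ha : τsq = (n : ℝ)⁻¹ * (∑ i, (r i) ^ 2) + (∑ k, φ k * g k) := by
    have hrr : ∑ i, (r i) ^ 2 = s ⬝ᵥ (Pi.single j 1 - φ) := by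
      have : ∑ i, (r i) ^ 2 = r ⬝ᵥ r := by
        simp [dotProduct, sq]
      rw [this]
      nth_rewrite 2 [hr]
      rw [dotProduct_mulVec, hs, mulVec_transpose]
    have hsum : (n : ℝ)⁻¹ * (s ⬝ᵥ (Pi.single j 1 - φ)) + (∑ k, φ k * g k)
        = τsq := by
      rw [dotProduct, Finset.mul_sum, ← Finset.sum_add_distrib]
      rw [Finset.sum_eq_single j]
      · simp [hφj, hgj, hτsq]
      · intro k _ hk
        simp only [Pi.sub_apply, Pi.single_apply, if_neg hk, zero_sub,
          mul_neg, mul_comm]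
        rw [← hkkt k hk]; ring
      · intro h; exact absurd (Finset.mem_univ j) h
    rw [hrr, ← hsum]
  -- w coordinates
  have hweq : ∀ k, w k = τsq⁻¹ * ((n : ℝ)⁻¹ * s k) - (Pi.single j 1 : Fin p → ℝ) k := by
    intro k
    have : ((n : ℝ)⁻¹ • (Xᵀ * X)) *ᵥ Θj = (n : ℝ)⁻¹ • (τsq⁻¹ • s) := by
      rw [hΘj, smul_mulVec, ← mulVec_mulVec, mulVec_smul, ← hr, hs, mulVec_smul]
    rw [hw, this]
    simp only [Pi.sub_apply, Pi.smul_apply, smul_eq_mul]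
    ring_nf
  have hwj : w j = 0 := by
    rw [hweq j, ← hτsq]
    simp [inv_mul_cancel₀ hτne]
  have hwk : ∀ k : Fin p, k ≠ j → w k = g k / τsq := by
    intro k hk
    rw [hweq k, hkkt k hk, Pi.single_apply, if_neg hk, sub_zero,
      div_eq_inv_mul]
  refine ⟨ha, hwj, hwk, ?_⟩
  have habs : ∀ k, |w k| = |g k| / |τsq| := by
    intro k
    by_cases hk : k = j
    · subst hk; rw [hwj, hgj]; simp
    · rw [hwk k hk, abs_div]
  calc (⨆ k, |w k|) = ⨆ k, |g k| * |τsq|⁻¹ := by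
        simp only [habs, div_eq_mul_inv]
    _ = (⨆ k, |g k|) * |τsq|⁻¹ :=
        (Real.iSup_mul_of_nonneg (by positivity) _).symm
    _ = (⨆ k, |g k|) / |τsq| := by rw [div_eq_mul_inv]
end

section
/- Let τ ∈ (0,1) and κ = min(τ, 1−τ). Let λ > 0, μ ≥ 0 and let p: ℝ → ℝ be μ-amenable with parameter λ; set P(v) = Σ_{j=1}^d p(v_j). Let Σ be a d×d real symmetric matrix with κ·λ_min(Σ) > 3μ/4, let X be an n×d real matrix with n ≥ 1, and set Σ̂ = (1/n)XᵀX. Let β*, β̂ ∈ ℝ^d with ‖β*‖₁ ≤ R, ‖β̂‖₁ ≤ R, and suppose β* has at most s ≥ 1 nonzero coordinates. Write Δ = β̂ − β* and assume: (H1) κ·ΔᵀΣ̂Δ ≤ z‖Δ‖₁ + P(β*) − P(β̂) + (μ/2)‖Δ‖₂² for some z ≥ 0; (H2) λ ≥ 4z; (H3) λ ≥ 8R·‖Σ̂ − Σ‖_max. Then ‖Δ‖₂ ≤ 6√s·λ / (4κ·λ_min(Σ) − 3μ) and ‖Δ‖₁ ≤ 4√s·‖Δ‖₂. (This is the deterministic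 core of Proposition 1: on the event where (H1)–(H3) hold, the ℓ² and ℓ¹ estimation errors of the regularized expectile estimator obey these bounds.) -/
open Matrix
open Matrix in
lemma rayleigh_lower {m : Type*} [Fintype m] [DecidableEq m] [Nonempty m] {A : Matrix m m ℝ}
    (hA : A.IsHermitian) (x : m → ℝ) :
    (⨅ i, hA.eigenvalues i) * (∑ j, x j ^ 2) ≤ x ⬝ᵥ (A *ᵥ x) := by
  set U : Matrix m m ℝ := (hA.eigenvectorUnitary : Matrix m m ℝ) with hUdef
  have hsU : star U = Uᵀ := by
    rw [Matrix.star_eq_conjTranspose, Matrix.conjTranspose_eq_transpose_of_trivial]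
  have hU1 : U * star U = 1 := (Matrix.mem_unitaryGroup_iff).mp hA.eigenvectorUnitary.2
  set y : m → ℝ := Uᵀ *ᵥ x with hy
  have hxA : x ⬝ᵥ (A *ᵥ x) = y ⬝ᵥ (Matrix.diagonal hA.eigenvalues *ᵥ y) := by
    conv_lhs => rw [hA.spectral_theorem]
    rw [RCLike.ofReal_real_eq_id]
    simp only [Unitary.conjStarAlgAut_apply, Function.comp_id, hsU, Function.id_comp]
    rw [← Matrix.mulVec_mulVec, ← Matrix.mulVec_mulVec, Matrix.dotProduct_mulVec x U,
      ← Matrix.mulVec_transpose]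
    rw [show star (hA.eigenvectorUnitary : Matrix m m ℝ) = Uᵀ from hsU]
  have hyy : y ⬝ᵥ y = x ⬝ᵥ x := by
    have h2 : x ⬝ᵥ x = x ⬝ᵥ ((U * star U) *ᵥ x) := by rw [hU1, Matrix.one_mulVec]
    rw [h2, hsU, ← Matrix.mulVec_mulVec, Matrix.dotProduct_mulVec x U, ← Matrix.mulVec_transpose]
  have hdiag : y ⬝ᵥ (Matrix.diagonal hA.eigenvalues *ᵥ y) = ∑ i, hA.eigenvalues i * (y i)^2 := by
    simp only [dotProduct, Matrix.mulVec_diagonal]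
    exact Finset.sum_congr rfl fun i _ => by ring
  have hsum : ∑ j, x j ^ 2 = ∑ i, (y i)^2 := by
    have h1 : x ⬝ᵥ x = ∑ j, x j ^ 2 := by
      simp [dotProduct, sq]
    have h2 : y ⬝ᵥ y = ∑ j, (y j) ^ 2 := by
      simp [dotProduct, sq]
    rw [← h1, ← hyy, h2]
  rw [hxA, hdiag, hsum, Finset.mul_sum]
  apply Finset.sum_le_sum
  intro i _
  have h3 : (⨅ i, hA.eigenvalues i) ≤ hA.eigenvalues i :=
    ciInf_le (Set.Finite.bddBelow (Set.finite_range _)) i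
  exact mul_le_mul_of_nonneg_right h3 (sq_nonneg _)

section Penalty
variable {lam mu : ℝ} {p : ℝ → ℝ}

/-- continuity of an amenable penalty, from convexity of `p + μ/2 t²`. -/
lemma amenable_continuous (hconv : ConvexOn ℝ Set.univ (fun t => p t + mu / 2 * t ^ 2)) :
    Continuous p := by
  have hq : Continuous (fun t => p t + mu / 2 * t ^ 2) := by
    rw [← continuousOn_univ]
    exact hconv.continuousOn isOpen_univ
  have : Continuous (fun t : ℝ => (p t + mu / 2 * t ^ 2) - mu / 2 * t ^ 2) :=
    hq.sub (by continuity)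
  simpa using this

lemma amenable_slope_tendsto (h0 : p 0 = 0)
    (hdiff : ∀ t : ℝ, t ≠ 0 → DifferentiableAt ℝ p t)
    (hlim : Filter.Tendsto (fun t => deriv p t) (nhdsWithin 0 (Set.Ioi 0)) (nhds lam))
    (hcont : Continuous p) :
    Filter.Tendsto (fun t => p t / t) (nhdsWithin 0 (Set.Ioi 0)) (nhds lam) := by
  rw [Metric.tendsto_nhdsWithin_nhds] at hlim ⊢
  intro ε hε
  obtain ⟨δ, hδ, H⟩ := hlim ε hε
  refine ⟨δ, hδ, ?_⟩
  intro t ht htd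
  have ht0 : (0:ℝ) < t := ht
  obtain ⟨c, hc, hceq⟩ := exists_deriv_eq_slope p ht0 (hcont.continuousOn)
    (fun x hx => ((hdiff x (ne_of_gt hx.1)).differentiableWithinAt))
  have : p t / t = deriv p c := by rw [hceq, h0, sub_zero, sub_zero]
  rw [this]
  apply H hc.1
  rw [Real.dist_eq, sub_zero, abs_of_pos hc.1]
  rw [Real.dist_eq, sub_zero, abs_of_pos ht0] at htd
  exact hc.2.trans htd

lemma amenable_even_abs (heven : ∀ t : ℝ, p (-t) = p t) (t : ℝ) : p |t| = p t := by
  rcases abs_cases t with ⟨h, _⟩ | ⟨h, _⟩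
  · rw [h]
  · rw [h, heven]

lemma amenable_ub (heven : ∀ t : ℝ, p (-t) = p t) (h0 : p 0 = 0)
    (hanti : AntitoneOn (fun t => p t / t) (Set.Ioi 0))
    (hst : Filter.Tendsto (fun t => p t / t) (nhdsWithin 0 (Set.Ioi 0)) (nhds lam)) :
    ∀ t : ℝ, p t ≤ lam * |t| := by
  have key : ∀ t : ℝ, 0 < t → p t ≤ lam * t := by
    intro t ht
    have hslope : p t / t ≤ lam := by
      by_contra hcon
      push_neg at hcon
      rw [Metric.tendsto_nhdsWithin_nhds] at hst
      obtain ⟨δ, hδ, H⟩ := hst (p t / t - lam) (by linarith)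
      set s : ℝ := min t δ / 2 with hs
      have hs0 : 0 < s := by positivity
      have hsδ : s < δ := by
        have : min t δ ≤ δ := min_le_right _ _
        simp only [hs]; linarith
      have hst' : s ≤ t := by
        have : min t δ ≤ t := min_le_left _ _
        simp only [hs]; linarith
      have h1 : |p s / s - lam| < p t / t - lam := by
        apply H hs0
        rw [Real.dist_eq, sub_zero, abs_of_pos hs0]; exact hsδ
      have h2 : p t / t ≤ p s / s := hanti hs0 ht hst'
      rw [abs_lt] at h1
      linarith [h1.1]
    calc p t = (p t / t) * t := by field_simp
    _ ≤ lam * t := mul_le_mul_of_nonneg_right hslope ht.le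
  intro t
  rcases lt_trichotomy t 0 with h | h | h
  · have := key (-t) (by linarith)
    rw [heven] at this
    rwa [abs_of_neg h]
  · simp [h, h0]
  · rw [abs_of_pos h]; exact key t h

lemma amenable_lb (heven : ∀ t : ℝ, p (-t) = p t) (h0 : p 0 = 0)
    (hconv : ConvexOn ℝ Set.univ (fun t => p t + mu / 2 * t ^ 2))
    (hst : Filter.Tendsto (fun t => p t / t) (nhdsWithin 0 (Set.Ioi 0)) (nhds lam)) :
    ∀ t : ℝ, lam * |t| - mu / 2 * t ^ 2 ≤ p t := by
  set q : ℝ → ℝ := fun t => p t + mu / 2 * t ^ 2 with hq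
  have hq0 : q 0 = 0 := by simp [hq, h0]
  have hqst : Filter.Tendsto (fun t => q t / t) (nhdsWithin 0 (Set.Ioi 0)) (nhds lam) := by
    have h2 : Filter.Tendsto (fun t : ℝ => mu / 2 * t) (nhdsWithin 0 (Set.Ioi 0)) (nhds 0) := by
      have hc : Continuous (fun t : ℝ => mu / 2 * t) := by continuity
      have := hc.tendsto (0:ℝ)
      simpa using this.mono_left nhdsWithin_le_nhds
    have h3 := hst.add h2
    rw [add_zero] at h3
    apply h3.congr'
    filter_upwards [self_mem_nhdsWithin] with t (ht : (0:ℝ) < t)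
    simp only [hq]
    field_simp
  have key : ∀ t : ℝ, 0 < t → lam * t ≤ q t := by
    intro t ht
    have hslope : lam ≤ q t / t := by
      by_contra hcon
      push_neg at hcon
      rw [Metric.tendsto_nhdsWithin_nhds] at hqst
      obtain ⟨δ, hδ, H⟩ := hqst (lam - q t / t) (by linarith)
      set s : ℝ := min t δ / 2 with hs
      have hs0 : 0 < s := by positivity
      have hsδ : s < δ := by
        have : min t δ ≤ δ := min_le_right _ _
        simp only [hs]; linarith
      have hst' : s ≤ t := by
        have : min t δ ≤ t := min_le_left _ _
        simp only [hs]; linarith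
      have h1 : |q s / s - lam| < lam - q t / t := by
        apply H hs0
        rw [Real.dist_eq, sub_zero, abs_of_pos hs0]; exact hsδ
      -- slope monotonicity: (q s - q 0)/(s-0) ≤ (q t - q 0)/(t-0)
      have h2 : q s / s ≤ q t / t := by
        have := hconv.secant_mono (a := 0) (x := s) (y := t) (Set.mem_univ _)
          (Set.mem_univ _) (Set.mem_univ _) (ne_of_gt hs0) (ne_of_gt ht) hst'
        simpa [hq0] using this
      rw [abs_lt] at h1
      linarith [h1.2]
    have := mul_le_mul_of_nonneg_right hslope ht.le
    calc lam * t ≤ (q t / t) * t := this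
    _ = q t := by field_simp
  intro t
  rcases lt_trichotomy t 0 with h | h | h
  · have := key (-t) (by linarith)
    simp only [hq, heven, neg_sq] at this
    rw [abs_of_neg h]
    linarith
  · simp [h, h0]
  · have := key t h
    simp only [hq] at this
    rw [abs_of_pos h]
    linarith

lemma amenable_nonneg (heven : ∀ t : ℝ, p (-t) = p t) (h0 : p 0 = 0)
    (hmono : MonotoneOn p (Set.Ici 0)) : ∀ t : ℝ, 0 ≤ p t := by
  have key : ∀ t : ℝ, 0 ≤ t → 0 ≤ p t := by
    intro t ht
    have := hmono (Set.mem_Ici.2 le_rfl) (Set.mem_Ici.2 ht) ht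
    rwa [h0] at this
  intro t
  rcases le_total 0 t with h | h
  · exact key t h
  · rw [← heven]; exact key (-t) (by linarith)

lemma amenable_subadd (h0 : p 0 = 0)
    (hanti : AntitoneOn (fun t => p t / t) (Set.Ioi 0)) :
    ∀ x y : ℝ, 0 ≤ x → 0 ≤ y → p (x + y) ≤ p x + p y := by
  intro x y hx hy
  rcases eq_or_lt_of_le hx with h | hx0
  · simp [← h, h0]
  rcases eq_or_lt_of_le hy with h | hy0
  · simp [← h, h0]
  have hxy : (0:ℝ) < x + y := by linarith
  have h1 : p (x + y) / (x + y) ≤ p x / x := hanti hx0 hxy (by linarith)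
  have h2 : p (x + y) / (x + y) ≤ p y / y := hanti hy0 hxy (by linarith)
  have h1' : x * (p (x + y) / (x + y)) ≤ p x := by
    rw [mul_div_assoc' x _ (x+y)] at *
    calc x * p (x+y) / (x+y) = (p (x+y) / (x+y)) * x := by ring
    _ ≤ (p x / x) * x := mul_le_mul_of_nonneg_right h1 hx0.le
    _ = p x := by field_simp
  have h2' : y * (p (x + y) / (x + y)) ≤ p y := by
    calc y * (p (x+y) / (x+y)) = (p (x+y) / (x+y)) * y := by ring
    _ ≤ (p y / y) * y := mul_le_mul_of_nonneg_right h2 hy0.le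
    _ = p y := by field_simp
  have : x * (p (x + y) / (x + y)) + y * (p (x + y) / (x + y)) = p (x+y) := by
    field_simp
  linarith

lemma amenable_lip (heven : ∀ t : ℝ, p (-t) = p t) (h0 : p 0 = 0)
    (hmono : MonotoneOn p (Set.Ici 0))
    (hanti : AntitoneOn (fun t => p t / t) (Set.Ioi 0))
    (hub : ∀ t : ℝ, p t ≤ lam * |t|) :
    ∀ a b : ℝ, p a - p b ≤ lam * |a - b| := by
  intro a b
  have h1 : p a = p |a| := (amenable_even_abs heven a).symm
  have h2 : p b = p |b| := (amenable_even_abs heven b).symm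
  have h3 : |a| ≤ |b| + |a - b| := by
    calc |a| = |b + (a - b)| := by ring_nf
    _ ≤ |b| + |a - b| := abs_add_le _ _
  have h4 : p |a| ≤ p (|b| + |a - b|) :=
    hmono (Set.mem_Ici.2 (abs_nonneg _)) (Set.mem_Ici.2 (by positivity)) h3
  have h5 : p (|b| + |a - b|) ≤ p |b| + p |a - b| :=
    amenable_subadd h0 hanti _ _ (abs_nonneg _) (abs_nonneg _)
  have h6 : p |a - b| ≤ lam * |a - b| := by
    have := hub |a - b|
    rwa [abs_abs] at this
  linarith [h1, h2, h4, h5, h6]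

open Matrix
section Aux
variable {lam mu : ℝ} {p : ℝ → ℝ}

lemma pc_bound1 (hlb : ∀ t : ℝ, lam * |t| - mu / 2 * t ^ 2 ≤ p t)
    (hnn : ∀ t : ℝ, 0 ≤ p t) (t : ℝ) :
    lam / 2 * |t| - mu / 4 * t ^ 2 ≤ p t := by
  have h1 := hlb t
  have h2 := hnn t
  linarith

lemma pc_bound2 (hmu : 0 ≤ mu) (hlb : ∀ t : ℝ, lam * |t| - mu / 2 * t ^ 2 ≤ p t)
    (hnn : ∀ t : ℝ, 0 ≤ p t) (t : ℝ) :
    3 * lam / 8 * |t| - 3 * mu / 16 * t ^ 2 ≤ p t := by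
  rcases le_total (mu * |t|) (2 * lam) with h | h
  · have h1 := hlb t
    have habs : |t| ^ 2 = t ^ 2 := sq_abs t
    nlinarith [abs_nonneg t, mul_nonneg (abs_nonneg t) (sub_nonneg.2 h)]
  · have h2 := hnn t
    have habs : |t| ^ 2 = t ^ 2 := sq_abs t
    nlinarith [abs_nonneg t, mul_nonneg (abs_nonneg t) (sub_nonneg.2 h)]

lemma dot_sub_le {d : ℕ} (M N : Matrix (Fin d) (Fin d) ℝ) (x : Fin d → ℝ) (e : ℝ)
    (h : ∀ i j, |M i j - N i j| ≤ e) :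
    x ⬝ᵥ (M *ᵥ x) ≤ x ⬝ᵥ (N *ᵥ x) + e * (∑ j, |x j|) ^ 2 := by
  have expand : ∀ P : Matrix (Fin d) (Fin d) ℝ,
      x ⬝ᵥ (P *ᵥ x) = ∑ i, ∑ j, x i * (P i j * x j) := by
    intro P
    simp [dotProduct, Matrix.mulVec, Finset.mul_sum]
  rw [expand, expand]
  have key : ∑ i, ∑ j, x i * (M i j * x j)
      = ∑ i, ∑ j, x i * (N i j * x j) + ∑ i, ∑ j, x i * ((M i j - N i j) * x j) := by
    rw [← Finset.sum_add_distrib]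
    refine Finset.sum_congr rfl fun i _ => ?_
    rw [← Finset.sum_add_distrib]
    exact Finset.sum_congr rfl fun j _ => by ring
  rw [key]
  have bound : ∑ i, ∑ j, x i * ((M i j - N i j) * x j) ≤ ∑ i, ∑ j, |x i| * (e * |x j|) := by
    refine Finset.sum_le_sum fun i _ => Finset.sum_le_sum fun j _ => ?_
    calc x i * ((M i j - N i j) * x j) ≤ |x i * ((M i j - N i j) * x j)| := le_abs_self _
    _ = |x i| * (|M i j - N i j| * |x j|) := by rw [abs_mul, abs_mul]
    _ ≤ |x i| * (e * |x j|) :=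
        mul_le_mul_of_nonneg_left
          (mul_le_mul_of_nonneg_right (h i j) (abs_nonneg _)) (abs_nonneg _)
  have eq2 : ∑ i, ∑ j, |x i| * (e * |x j|) = e * (∑ j, |x j|) ^ 2 := by
    have h1 : ∀ i, ∑ j, |x i| * (e * |x j|) = e * (|x i| * ∑ j, |x j|) := fun i => by
      rw [Finset.mul_sum, Finset.mul_sum]
      exact Finset.sum_congr rfl fun j _ => by ring
    rw [Finset.sum_congr rfl fun i _ => h1 i, ← Finset.mul_sum, ← Finset.sum_mul, sq]
  linarith [bound, eq2.symm ▸ bound]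

end Aux


/-- Deterministic core of Proposition 1: on the event where the basic inequality
(H1) and the tuning conditions (H2)–(H3) hold, the ℓ² and ℓ¹ estimation errors of
the regularized expectile estimator satisfy
`‖Δ‖₂ ≤ 6√s λ/(4κ λ_min(Σ) − 3μ)` and `‖Δ‖₁ ≤ 4√s ‖Δ‖₂`, where `κ = min(τ,1−τ)`
and `Δ = β̂ − β*`. -/
theorem expectile_estimation_error_bounds
    (τ : ℝ) (hτ : τ ∈ Set.Ioo (0 : ℝ) 1)
    (lam mu : ℝ) (hlam : 0 < lam) (hmu : 0 ≤ mu)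
    (p : ℝ → ℝ) (hp : IsAmenable lam mu p)
    (d n s : ℕ) (hn : 1 ≤ n) (hs : 1 ≤ s)
    (Sig : Matrix (Fin d) (Fin d) ℝ) (hSig : Sig.IsHermitian)
    (heig : min τ (1 - τ) * (⨅ i, hSig.eigenvalues i) > 3 * mu / 4)
    (X : Matrix (Fin n) (Fin d) ℝ)
    (Sighat : Matrix (Fin d) (Fin d) ℝ)
    (hSighat : Sighat = (n : ℝ)⁻¹ • (Xᵀ * X))
    (R : ℝ) (βstar βhat : Fin d → ℝ)
    (hRstar : ∑ j, |βstar j| ≤ R) (hRhat : ∑ j, |βhat j| ≤ R)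
    (hsparse : (Finset.univ.filter fun j => βstar j ≠ 0).card ≤ s)
    (z : ℝ) (hz : 0 ≤ z)
    (H1 : min τ (1 - τ) * ((βhat - βstar) ⬝ᵥ (Sighat *ᵥ (βhat - βstar)))
        ≤ z * (∑ j, |βhat j - βstar j|)
          + (∑ j, p (βstar j)) - (∑ j, p (βhat j))
          + mu / 2 * (∑ j, (βhat j - βstar j) ^ 2))
    (H2 : lam ≥ 4 * z)
    (H3 : lam ≥ 8 * R * (⨆ i, ⨆ j, |Sighat i j - Sig i j|)) :
    Real.sqrt (∑ j, (βhat j - βstar j) ^ 2)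
        ≤ 6 * Real.sqrt s * lam
            / (4 * min τ (1 - τ) * (⨅ i, hSig.eigenvalues i) - 3 * mu) ∧
    (∑ j, |βhat j - βstar j|)
        ≤ 4 * Real.sqrt s * Real.sqrt (∑ j, (βhat j - βstar j) ^ 2) := by
  obtain ⟨heven, h0, hmono, hanti, hdiff, hlim, hconv⟩ := hp
  have hcont : Continuous p := amenable_continuous hconv
  have hst := amenable_slope_tendsto h0 hdiff hlim hcont
  have hub := amenable_ub heven h0 hanti hst
  have hlb := amenable_lb heven h0 hconv hst
  have hnn := amenable_nonneg heven h0 hmono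
  have hlip := amenable_lip heven h0 hmono hanti hub
  set k : ℝ := min τ (1 - τ) with hkdef
  set ρ : ℝ := ⨅ i, hSig.eigenvalues i with hρdef
  have hk0 : 0 < k := lt_min hτ.1 (by linarith [hτ.2])
  have hk2 : k ≤ 1 / 2 := by
    rcases le_total τ (1 - τ) with h | h
    · have h1 : k ≤ τ := min_le_left _ _
      linarith
    · have h1 : k ≤ 1 - τ := min_le_right _ _
      linarith
  have hkρ : 3 * mu / 4 < k * ρ := heig
  clear_value k
  rcases Nat.eq_zero_or_pos d with hd0 | hd0
  · exfalso
    subst hd0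
    have hempty : ρ = 0 := by
      rw [hρdef]
      exact Real.iInf_of_isEmpty _
    rw [hempty, mul_zero] at hkρ
    linarith
  haveI : Nonempty (Fin d) := Fin.pos_iff_nonempty.mp hd0
  set L : ℝ := ∑ j, |βhat j - βstar j| with hLdef
  set r2 : ℝ := ∑ j, (βhat j - βstar j) ^ 2 with hr2def
  set S : Finset (Fin d) := Finset.univ.filter (fun j => βstar j ≠ 0) with hSdef
  set A : ℝ := ∑ j ∈ S, |βhat j - βstar j| with hAdef
  set B : ℝ := ∑ j ∈ Finset.univ.filter (fun j => ¬ βstar j ≠ 0), |βhat j - βstar j| with hBdef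
  set U2 : ℝ := ∑ j ∈ S, (βhat j - βstar j) ^ 2 with hU2def
  set V2 : ℝ := ∑ j ∈ Finset.univ.filter (fun j => ¬ βstar j ≠ 0), (βhat j - βstar j) ^ 2
    with hV2def
  clear_value S A B U2 V2
  clear_value L r2
  have hLsplit : A + B = L := by
    rw [hAdef, hBdef, hLdef, hSdef]
    exact Finset.sum_filter_add_sum_filter_not _ _ _
  have hr2split : U2 + V2 = r2 := by
    rw [hU2def, hV2def, hr2def, hSdef]
    exact Finset.sum_filter_add_sum_filter_not _ _ _
  have hA0 : 0 ≤ A := hAdef ▸ Finset.sum_nonneg fun _ _ => abs_nonneg _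
  have hB0 : 0 ≤ B := hBdef ▸ Finset.sum_nonneg fun _ _ => abs_nonneg _
  have hL0 : 0 ≤ L := hLdef ▸ Finset.sum_nonneg fun _ _ => abs_nonneg _
  have hU20 : 0 ≤ U2 := hU2def ▸ Finset.sum_nonneg fun _ _ => sq_nonneg _
  have hV20 : 0 ≤ V2 := hV2def ▸ Finset.sum_nonneg fun _ _ => sq_nonneg _
  have hr20 : 0 ≤ r2 := hr2def ▸ Finset.sum_nonneg fun _ _ => sq_nonneg _
  -- Rayleigh quotient bound
  have hQF : ρ * r2 ≤ (βhat - βstar) ⬝ᵥ (Sig *ᵥ (βhat - βstar)) := by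
    have h1 := rayleigh_lower hSig (βhat - βstar)
    rw [hρdef, hr2def]
    simpa [Pi.sub_apply] using h1
  -- entrywise sup bound
  set e : ℝ := ⨆ i, ⨆ j, |Sighat i j - Sig i j| with hedef
  clear_value e
  have hentry : ∀ i j, |Sighat i j - Sig i j| ≤ e := by
    intro i j
    rw [hedef]
    have h1 : |Sighat i j - Sig i j| ≤ ⨆ j', |Sighat i j' - Sig i j'| :=
      le_ciSup (f := fun j' => |Sighat i j' - Sig i j'|)
        (Set.Finite.bddAbove (Set.finite_range _)) j
    exact h1.trans (le_ciSup (f := fun i' => ⨆ j', |Sighat i' j' - Sig i' j'|)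
      (Set.Finite.bddAbove (Set.finite_range _)) i)
  have he0 : 0 ≤ e :=
    le_trans (abs_nonneg _) (hentry (Classical.arbitrary _) (Classical.arbitrary _))
  have hR0 : 0 ≤ R := le_trans (Finset.sum_nonneg fun _ _ => abs_nonneg _) hRstar
  have hL2R : L ≤ 2 * R := by
    have h1 : L ≤ (∑ j, |βhat j|) + ∑ j, |βstar j| := by
      rw [hLdef, ← Finset.sum_add_distrib]
      exact Finset.sum_le_sum fun j _ => abs_sub _ _
    linarith
  have heR : e * R ≤ lam / 8 := by linarith only [H3]
  -- quadratic perturbation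
  have hQdiff : (βhat - βstar) ⬝ᵥ (Sig *ᵥ (βhat - βstar))
      ≤ (βhat - βstar) ⬝ᵥ (Sighat *ᵥ (βhat - βstar)) + e * L ^ 2 := by
    have h1 := dot_sub_le Sig Sighat (βhat - βstar) e
      (fun i j => by rw [abs_sub_comm]; exact hentry i j)
    have h2 : (∑ j, |(βhat - βstar) j|) = L := by
      rw [hLdef]; exact Finset.sum_congr rfl fun j _ => by simp [Pi.sub_apply]
    rw [h2] at h1
    exact h1
  have hslop : k * (e * L ^ 2) ≤ lam / 8 * L := by
    have hkL : k * L ≤ R := by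
      linarith only [mul_nonneg (by linarith only [hk2] : (0:ℝ) ≤ 1/2 - k) hL0, hL2R, hL0]
    have t1 : 0 ≤ e * L * (R - k * L) :=
      mul_nonneg (mul_nonneg he0 hL0) (by linarith only [hkL])
    have t2 : 0 ≤ L * (lam / 8 - e * R) := mul_nonneg hL0 (by linarith only [heR])
    linarith only [t1, t2]
  -- penalty decomposition
  set PB : ℝ := ∑ j ∈ Finset.univ.filter (fun j => ¬ βstar j ≠ 0), p (βhat j - βstar j)
    with hPBdef
  clear_value PB
  have hpen : (∑ j, p (βstar j)) - (∑ j, p (βhat j)) ≤ lam * A - PB := by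
    have hsplit : (∑ j, p (βstar j)) - (∑ j, p (βhat j))
        = (∑ j ∈ S, (p (βstar j) - p (βhat j)))
          + ∑ j ∈ Finset.univ.filter (fun j => ¬ βstar j ≠ 0), (p (βstar j) - p (βhat j)) := by
      rw [hSdef, Finset.sum_filter_add_sum_filter_not Finset.univ (fun j => βstar j ≠ 0)
        (fun j => p (βstar j) - p (βhat j)), Finset.sum_sub_distrib]
    have hSpart : (∑ j ∈ S, (p (βstar j) - p (βhat j))) ≤ lam * A := by
      rw [hAdef, Finset.mul_sum]
      exact Finset.sum_le_sum fun j _ => by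
        have := hlip (βstar j) (βhat j)
        rw [abs_sub_comm] at this
        linarith
    have hScpart : (∑ j ∈ Finset.univ.filter (fun j => ¬ βstar j ≠ 0),
        (p (βstar j) - p (βhat j))) = -PB := by
      rw [hPBdef, ← Finset.sum_neg_distrib]
      refine Finset.sum_congr rfl fun j hj => ?_
      have hj0 : βstar j = 0 := by
        have := (Finset.mem_filter.mp hj).2
        push_neg at this
        exact this
      rw [hj0, h0, sub_zero, zero_sub]
    rw [hsplit, hScpart]
    linarith
  -- master inequality
  have hzL : z * L ≤ lam / 4 * L := mul_le_mul_of_nonneg_right (by linarith) hL0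
  have hM : k * ρ * r2 + PB ≤ 3 * lam / 8 * L + lam * A + mu / 2 * r2 := by
    have c1 : k * (ρ * r2) ≤ k * ((βhat - βstar) ⬝ᵥ (Sig *ᵥ (βhat - βstar))) :=
      mul_le_mul_of_nonneg_left hQF hk0.le
    have c2 : k * ((βhat - βstar) ⬝ᵥ (Sig *ᵥ (βhat - βstar)))
        ≤ k * ((βhat - βstar) ⬝ᵥ (Sighat *ᵥ (βhat - βstar))) + k * (e * L ^ 2) := by
      have h := mul_le_mul_of_nonneg_left hQdiff hk0.le
      linarith only [h]
    linarith only [H1, c1, c2, hslop, hzL, hpen]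
  -- summed per-coordinate penalty bounds
  have hsum_bound : ∀ (a b : ℝ), (∀ t : ℝ, a * |t| - b * t ^ 2 ≤ p t) →
      a * B - b * V2 ≤ PB := by
    intro a b hab
    have h1 : ∑ j ∈ Finset.univ.filter (fun j => ¬ βstar j ≠ 0),
        (a * |βhat j - βstar j| - b * (βhat j - βstar j) ^ 2)
        ≤ ∑ j ∈ Finset.univ.filter (fun j => ¬ βstar j ≠ 0), p (βhat j - βstar j) :=
      Finset.sum_le_sum fun j _ => hab _
    rw [Finset.sum_sub_distrib, ← Finset.mul_sum, ← Finset.mul_sum, ← hBdef, ← hV2def,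
      ← hPBdef] at h1
    exact h1
  have hPB1 : lam / 2 * B - mu / 4 * V2 ≤ PB :=
    hsum_bound _ _ (pc_bound1 hlb hnn)
  have hPB2 : 3 * lam / 8 * B - 3 * mu / 16 * V2 ≤ PB :=
    hsum_bound _ _ (pc_bound2 hmu hlb hnn)
  have hPB3 : lam * B - mu / 2 * V2 ≤ PB :=
    hsum_bound _ _ (fun t => by have := hlb t; linarith)
  -- helper products for linear arithmetic
  have hcr2 : 3 * mu / 4 * r2 ≤ k * ρ * r2 := by
    linarith only [mul_nonneg (by linarith only [hkρ] : (0:ℝ) ≤ k * ρ - 3 * mu / 4) hr20]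
  have hlamL : lam * L = lam * A + lam * B := by rw [← hLsplit]; ring
  have hmur2 : mu * r2 = mu * U2 + mu * V2 := by rw [← hr2split]; ring
  have hmuU2 : 0 ≤ mu * U2 := mul_nonneg hmu hU20
  have hmuV2 : 0 ≤ mu * V2 := mul_nonneg hmu hV20
  have hlamB : 0 ≤ lam * B := mul_nonneg hlam.le hB0
  have hlamA : 0 ≤ lam * A := mul_nonneg hlam.le hA0
  -- key linear consequences
  have hE2 : k * ρ * r2 - 3 * mu / 4 * r2 ≤ 11 * lam / 8 * A := by
    linarith only [hM, hPB1, hlamL, hmur2, hmuU2, hlamB]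
  have hP2 : mu / 4 * U2 + mu / 16 * V2 ≤ 11 * lam / 8 * A := by
    linarith only [hM, hPB2, hcr2, hlamL, hmur2, hlamB]
  have hP3 : 5 * lam / 8 * B + mu / 4 * U2 ≤ 11 * lam / 8 * A + mu / 4 * V2 := by
    linarith only [hM, hPB3, hcr2, hlamL, hmur2]
  -- square roots
  set sq : ℝ := Real.sqrt s with hsqdef
  set u : ℝ := Real.sqrt U2 with hudef
  set v : ℝ := Real.sqrt V2 with hvdef
  set r : ℝ := Real.sqrt r2 with hrdef
  have hsq0 : 0 ≤ sq := hsqdef ▸ Real.sqrt_nonneg _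
  have hu0 : 0 ≤ u := hudef ▸ Real.sqrt_nonneg _
  have hv0 : 0 ≤ v := hvdef ▸ Real.sqrt_nonneg _
  have hr0 : 0 ≤ r := hrdef ▸ Real.sqrt_nonneg _
  have hu2 : u ^ 2 = U2 := by rw [hudef]; exact Real.sq_sqrt hU20
  have hv2 : v ^ 2 = V2 := by rw [hvdef]; exact Real.sq_sqrt hV20
  have hr2eq : r ^ 2 = r2 := by rw [hrdef]; exact Real.sq_sqrt hr20
  have hu_r : u ≤ r := by rw [hudef, hrdef]; exact Real.sqrt_le_sqrt (by linarith)
  have hv_r : v ≤ r := by rw [hvdef, hrdef]; exact Real.sqrt_le_sqrt (by linarith)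
  have hA_su : A ≤ sq * u := by
    have hcs := Finset.sum_mul_sq_le_sq_mul_sq S (fun _ => (1:ℝ))
      (fun j => |βhat j - βstar j|)
    simp only [one_mul, one_pow, sq_abs, Finset.sum_const, nsmul_eq_mul, mul_one] at hcs
    rw [← hAdef, ← hU2def] at hcs
    have hcard : (S.card : ℝ) ≤ (s : ℝ) := by exact_mod_cast hsparse
    have hA2 : A ^ 2 ≤ (s : ℝ) * U2 := by
      calc A ^ 2 ≤ (S.card : ℝ) * U2 := hcs
      _ ≤ (s : ℝ) * U2 := mul_le_mul_of_nonneg_right hcard hU20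
    calc A = Real.sqrt (A ^ 2) := (Real.sqrt_sq hA0).symm
    _ ≤ Real.sqrt ((s : ℝ) * U2) := Real.sqrt_le_sqrt hA2
    _ = sq * u := by rw [Real.sqrt_mul (Nat.cast_nonneg s), ← hsqdef, ← hudef]
  clear_value sq u v r
  -- ℓ2 bound
  have hD0 : 0 < 4 * k * ρ - 3 * mu := by linarith only [hkρ]
  constructor
  · rcases eq_or_lt_of_le hr0 with hr | hr
    · rw [← hr]
      exact div_nonneg
        (mul_nonneg (mul_nonneg (by norm_num) hsq0) hlam.le) hD0.le
    · rw [le_div_iff₀ hD0]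
      have key0 : (k * ρ - 3 * mu / 4) * r2 ≤ 11 * lam / 8 * (sq * r) := by
        have h1 : 11 * lam / 8 * A ≤ 11 * lam / 8 * (sq * u) :=
          mul_le_mul_of_nonneg_left hA_su (by linarith only [hlam])
        have h2 : 11 * lam / 8 * (sq * u) ≤ 11 * lam / 8 * (sq * r) :=
          mul_le_mul_of_nonneg_left (mul_le_mul_of_nonneg_left hu_r hsq0)
            (by linarith only [hlam])
        linarith only [hE2, h1, h2]
      have hkρr2 : (k * ρ - 3 * mu / 4) * r ^ 2 = (k * ρ - 3 * mu / 4) * r2 := by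
        rw [hr2eq]
      have key1 : ((k * ρ - 3 * mu / 4) * r) * r ≤ (11 * lam / 8 * sq) * r := by
        have h3 : (k * ρ - 3 * mu / 4) * r ^ 2 ≤ 11 * lam / 8 * (sq * r) := by
          rw [hkρr2]; exact key0
        linarith only [h3]
      have key2 := le_of_mul_le_mul_right key1 hr
      have hlamsq : 0 ≤ lam * sq := mul_nonneg hlam.le hsq0
      linarith only [key2, hlamsq]
  -- ℓ1 bound
  · have e1 : mu / 16 * V2 ≤ 11 * lam / 8 * (sq * u) - mu / 4 * U2 := by
      have h1 : 11 * lam / 8 * A ≤ 11 * lam / 8 * (sq * u) :=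
        mul_le_mul_of_nonneg_left hA_su (by linarith only [hlam])
      linarith only [hP2, h1]
    have e2 : mu * (mu / 16 * V2) ≤ mu * (11 * lam / 8 * (sq * u) - mu / 4 * U2) :=
      mul_le_mul_of_nonneg_left e1 hmu
    rw [← hu2, ← hv2] at e2
    have h1 : (mu * v) ^ 2 ≤ (11 / 2 * (lam * sq)) ^ 2 := by
      linarith only [e2, sq_nonneg (2 * (mu * u) - 11 / 2 * (lam * sq))]
    have muv : mu * v ≤ 11 / 2 * (lam * sq) := by
      have hx0 : 0 ≤ mu * v := mul_nonneg hmu hv0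
      have hy0 : 0 ≤ 11 / 2 * (lam * sq) := by positivity
      calc mu * v = Real.sqrt ((mu * v) ^ 2) := (Real.sqrt_sq hx0).symm
      _ ≤ Real.sqrt ((11 / 2 * (lam * sq)) ^ 2) := Real.sqrt_le_sqrt h1
      _ = 11 / 2 * (lam * sq) := Real.sqrt_sq hy0
    have e3 : mu / 4 * v ^ 2 ≤ 11 / 8 * lam * (sq * v) := by
      have h := mul_le_mul_of_nonneg_right muv hv0
      linarith only [h]
    have e4 : lam * (5 * B) ≤ lam * (11 * (sq * u) + 11 * (sq * v)) := by
      have h1 : 11 * lam / 8 * A ≤ 11 * lam / 8 * (sq * u) :=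
        mul_le_mul_of_nonneg_left hA_su (by linarith only [hlam])
      have hP3' : 5 * lam / 8 * B + mu / 4 * u ^ 2 ≤ 11 * lam / 8 * A + mu / 4 * v ^ 2 := by
        rw [hu2, hv2]; exact hP3
      have hmuu : 0 ≤ mu * u ^ 2 := mul_nonneg hmu (sq_nonneg _)
      linarith only [hP3', e3, h1, hmuu]
    have B5 : 5 * B ≤ 11 * (sq * u) + 11 * (sq * v) := le_of_mul_le_mul_left e4 hlam
    have e6 : 16 * u + 11 * v ≤ 20 * r := by
      have h2 : (16 * u + 11 * v) ^ 2 ≤ (20 * r) ^ 2 := by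
        linarith only [sq_nonneg (12 * u - 44 / 3 * v), hr2eq, hu2, hv2, hr2split, sq_nonneg v,
          mul_nonneg hu0 hv0]
      calc 16 * u + 11 * v = Real.sqrt ((16 * u + 11 * v) ^ 2) :=
        (Real.sqrt_sq (by linarith)).symm
      _ ≤ Real.sqrt ((20 * r) ^ 2) := Real.sqrt_le_sqrt h2
      _ = 20 * r := Real.sqrt_sq (by linarith)
    have e7 : sq * (16 * u + 11 * v) ≤ sq * (20 * r) :=
      mul_le_mul_of_nonneg_left e6 hsq0
    calc L = A + B := hLsplit.symm
    _ ≤ 4 * sq * r := by linarith only [hA_su, B5, e7]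
end Penalty
end
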